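/- Let G be a plane graph that contains neither K4 nor C5 (the cycle of length 5) as a subgraph, on n vertices with n ≥ 5, and with minimum degree δ(G) ≥ 3. Then the number of edges of G satisfies e(G) ≤ (15/7)(n − 2). -/

import Mathlib

open SimpleGraph

namespace PlanarTuran

/-- Reversal of darts, as a permutation of the darts of `G`. -/
def dartRev {V : Type*} (G : SimpleGraph V) : Equiv.Perm G.Dart where
  toFun := Dart.symm
  invFun := Dart.symm
  left_inv d := Dart.symm_symm d
  right_inv d := Dart.symm_symm d

/-- A rotation system (combinatorial embedding) of a simple graph `G`: a permutation of the
darts which fixes the initial vertex of every dart and is a single cycle on the darts leaving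
each given vertex. -/
structure RotationSystem {V : Type*} (G : SimpleGraph V) where
  rot : Equiv.Perm G.Dart
  rot_fst : ∀ d : G.Dart, (rot d).fst = d.fst
  rot_cycle : ∀ d d' : G.Dart, d.fst = d'.fst → rot.SameCycle d d'

namespace RotationSystem

variable {V : Type*} {G : SimpleGraph V}

/-- The face permutation of the embedding: its orbits are the faces of the plane graph. -/
def facePerm (R : RotationSystem G) : Equiv.Perm G.Dart :=
  (dartRev G).trans R.rot

/-- The face containing (the side of) a dart, encoded as the set of darts on its boundary walk. -/
def faceOf (R : RotationSystem G) (d : G.Dart) : Set G.Dart :=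
  {d' | R.facePerm.SameCycle d d'}

/-- The length of the face incident to the dart `d`: the number of edge-sides on its
boundary walk (a bridge is counted twice). -/
noncomputable def faceLen (R : RotationSystem G) (d : G.Dart) : ℕ :=
  (R.faceOf d).ncard

/-- Darts lying on the same face. -/
def faceSetoid (R : RotationSystem G) : Setoid G.Dart :=
  ⟨R.facePerm.SameCycle,
   ⟨fun d => Equiv.Perm.SameCycle.refl _ d, fun h => h.symm, fun h h' => h.trans h'⟩⟩

/-- The number of faces of the embedded graph (only counting faces having at least one edge on
their boundary). -/
noncomputable def numFaces (R : RotationSystem G) : ℕ :=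
  Nat.card (Quotient R.faceSetoid)

/-- Darts on the same face, within the connected component `C`. -/
def faceSetoidIn (R : RotationSystem G) (C : G.ConnectedComponent) :
    Setoid {d : G.Dart // G.connectedComponentMk d.fst = C} :=
  ⟨fun d d' => R.facePerm.SameCycle d.1 d'.1,
   ⟨fun d => Equiv.Perm.SameCycle.refl _ _, fun h => h.symm, fun h h' => h.trans h'⟩⟩

/-- The rotation system is a *plane* (genus zero) embedding: every connected component
containing at least one edge satisfies Euler's formula `n - e + f = 2`
(written here as `2*n + 2*f = 2*e + 4`, where `2*e` is the number of darts). -/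
def GenusZero (R : RotationSystem G) : Prop :=
  ∀ C : G.ConnectedComponent, (∃ d : G.Dart, G.connectedComponentMk d.fst = C) →
    2 * Nat.card {v : V // G.connectedComponentMk v = C}
      + 2 * Nat.card (Quotient (R.faceSetoidIn C))
      = Nat.card {d : G.Dart // G.connectedComponentMk d.fst = C} + 4

/-- The contribution `f(e) = 1/l₁ + 1/l₂` of an edge `e` to the face number, where `l₁, l₂`
are the lengths of the faces incident to the two darts of `e` (for a bridge both darts lie
on the same face, giving `f(e) = 2/l`). -/
noncomputable def fEdge [Fintype V] [DecidableEq V] [DecidableRel G.Adj]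
    (R : RotationSystem G) (e : Sym2 V) : ℚ :=
  ∑ d ∈ Finset.univ.filter (fun d : G.Dart => d.edge = e), (1 : ℚ) / (R.faceLen d)

/-- The edges `e₁` and `e₂` both lie on a common `3`-face. -/
def shares3Face (R : RotationSystem G) (e₁ e₂ : Sym2 V) : Prop :=
  ∃ d₁ d₂ : G.Dart, d₁.edge = e₁ ∧ d₂.edge = e₂ ∧ R.faceLen d₁ = 3 ∧
    R.facePerm.SameCycle d₁ d₂

/-- The triangular block generated by an edge `e`: the closure of `{e}` under adding all
edges of any `3`-face containing an edge already present. -/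
def triBlockOf (R : RotationSystem G) (e : Sym2 V) : Set (Sym2 V) :=
  {e' | Relation.ReflTransGen R.shares3Face e e'}

/-- `B` is a triangular block of the plane graph `G`. -/
def IsTriangularBlock (R : RotationSystem G) (B : Set (Sym2 V)) : Prop :=
  ∃ e ∈ G.edgeSet, B = R.triBlockOf e

end RotationSystem

/-- A graph is planar iff it admits a genus-zero rotation system. -/
def _root_.SimpleGraph.IsPlanar {V : Type*} (G : SimpleGraph V) : Prop :=
  ∃ R : RotationSystem G, R.GenusZero

/-- `G` contains no cycle of length `k`; equivalently, no subgraph isomorphic to `C_k`. -/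
def _root_.SimpleGraph.CycleFree {V : Type*} (G : SimpleGraph V) (k : ℕ) : Prop :=
  ∀ ⦃v : V⦄ (w : G.Walk v v), w.IsCycle → w.length ≠ k

/-- A graph is 2-connected if it has at least 3 vertices and deleting any single vertex
leaves it connected. -/
def _root_.SimpleGraph.IsTwoConnected {V : Type*} (G : SimpleGraph V) : Prop :=
  3 ≤ Nat.card V ∧ ∀ v : V, (G.induce {u | u ≠ v}).Connected

/-- The set of vertices covered by a set `B` of edges. -/
def blockVerts {V : Type*} (B : Set (Sym2 V)) : Set V :=
  {v | ∃ e ∈ B, v ∈ e}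

/-- An edge set forming a single edge `K₂`. -/
def IsK2Block {V : Type*} (B : Set (Sym2 V)) : Prop :=
  ∃ u v : V, u ≠ v ∧ B = {s(u, v)}

/-- An edge set forming a triangle `K₃`. -/
def IsK3Block {V : Type*} (B : Set (Sym2 V)) : Prop :=
  ∃ u v w : V, u ≠ v ∧ u ≠ w ∧ v ≠ w ∧ B = {s(u, v), s(v, w), s(u, w)}

/-- An edge set forming `B₄`, two triangles `u v w` and `v w x` sharing the edge `v w`
(`K₄` minus an edge). -/
def IsB4Block {V : Type*} (B : Set (Sym2 V)) : Prop :=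
  ∃ u v w x : V, u ≠ v ∧ u ≠ w ∧ u ≠ x ∧ v ≠ w ∧ v ≠ x ∧ w ≠ x ∧
    B = {s(u, v), s(u, w), s(v, w), s(v, x), s(w, x)}

/-- An edge set forming `B₅ₐ`: a path `x₁x₂x₃x₄` plus an apex `y` joined to all of
`x₁, x₂, x₃, x₄`. -/
def IsB5aBlock {V : Type*} (B : Set (Sym2 V)) : Prop :=
  ∃ y x₁ x₂ x₃ x₄ : V, y ≠ x₁ ∧ y ≠ x₂ ∧ y ≠ x₃ ∧ y ≠ x₄ ∧ x₁ ≠ x₂ ∧ x₁ ≠ x₃ ∧ x₁ ≠ x₄ ∧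
    x₂ ≠ x₃ ∧ x₂ ≠ x₄ ∧ x₃ ≠ x₄ ∧
    B = {s(y, x₁), s(y, x₂), s(y, x₃), s(y, x₄), s(x₁, x₂), s(x₂, x₃), s(x₃, x₄)}

/-- An edge set forming `B₅ᵦ`, the wheel `W₄`: a `4`-cycle `x₁x₂x₃x₄` plus a center `c`
joined to all four cycle vertices. -/
def IsB5bBlock {V : Type*} (B : Set (Sym2 V)) : Prop :=
  ∃ c x₁ x₂ x₃ x₄ : V, c ≠ x₁ ∧ c ≠ x₂ ∧ c ≠ x₃ ∧ c ≠ x₄ ∧ x₁ ≠ x₂ ∧ x₁ ≠ x₃ ∧ x₁ ≠ x₄ ∧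
    x₂ ≠ x₃ ∧ x₂ ≠ x₄ ∧ x₃ ≠ x₄ ∧
    B = {s(c, x₁), s(c, x₂), s(c, x₃), s(c, x₄), s(x₁, x₂), s(x₂, x₃), s(x₃, x₄), s(x₄, x₁)}



/-- functions invariant under a permutation are invariant under all its integer powers -/
lemma zpow_invariant {α : Type*} {β : Sort*} (p : Equiv.Perm α) (f : α → β)
    (h : ∀ x, f (p x) = f x) : ∀ (i : ℤ) (x : α), f ((p ^ i) x) = f x := by
  have hinv : ∀ x, f (p⁻¹ x) = f x := by
    intro x
    have := h (p⁻¹ x)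
    rw [show p (p⁻¹ x) = x from p.apply_symm_apply x] at this; exact this.symm
  intro i
  induction i using Int.induction_on with
  | zero => intro x; simp
  | succ i ih =>
      intro x
      have : (p ^ ((i : ℤ) + 1)) x = (p ^ (i : ℤ)) (p x) := by
        rw [zpow_add_one]
        rfl
      rw [this, ih, h]
  | pred i ih =>
      intro x
      have : (p ^ (-(i : ℤ) - 1)) x = (p ^ (-(i : ℤ))) (p⁻¹ x) := by
        rw [zpow_sub_one]
        rfl
      rw [this, ih, hinv]

namespace RotationSystem

variable {V : Type*} {G : SimpleGraph V} (R : RotationSystem G)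

lemma facePerm_apply (d : G.Dart) : R.facePerm d = R.rot d.symm := rfl

lemma facePerm_fst (d : G.Dart) : (R.facePerm d).fst = d.snd := by
  rw [facePerm_apply, R.rot_fst]
  rfl

lemma mem_faceOf {d d' : G.Dart} : d' ∈ R.faceOf d ↔ R.facePerm.SameCycle d d' := Iff.rfl

lemma mem_faceOf_self (d : G.Dart) : d ∈ R.faceOf d := Equiv.Perm.SameCycle.refl _ _

lemma faceOf_eq_of_sameCycle {d d' : G.Dart} (h : R.facePerm.SameCycle d d') :
    R.faceOf d = R.faceOf d' := by
  ext x
  exact ⟨fun hx => h.symm.trans hx, fun hx => h.trans hx⟩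

lemma faceLen_eq_of_sameCycle {d d' : G.Dart} (h : R.facePerm.SameCycle d d') :
    R.faceLen d = R.faceLen d' := by
  unfold faceLen
  rw [R.faceOf_eq_of_sameCycle h]

lemma pow_mem_faceOf (d : G.Dart) (n : ℕ) : (R.facePerm ^ n) d ∈ R.faceOf d :=
  ⟨(n : ℤ), by rw [zpow_natCast]⟩


variable [Fintype V] [DecidableEq V] [DecidableRel G.Adj]

lemma rot_fix_false (hdeg : ∀ v : V, 3 ≤ G.degree v) {e : G.Dart} (h : R.rot e = e) : False := by
  have hall : ∀ d : G.Dart, d.fst = e.fst → d = e := by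
    intro d hd
    obtain ⟨i, hi⟩ := R.rot_cycle e d hd.symm
    have hfix : ∀ x : G.Dart, (R.rot x = e) = (x = e) := by
      intro x
      apply propext
      constructor
      · intro hx
        have : R.rot x = R.rot e := by rw [hx, h]
        exact R.rot.injective this
      · intro hx; rw [hx, h]
    have h2 := zpow_invariant R.rot (fun x => x = e) hfix i e
    simp only [eq_self_iff_true, eq_iff_iff, iff_true] at h2
    rw [← hi]
    exact h2
  have hsub : G.neighborFinset e.fst ⊆ {e.snd} := by
    intro w hw
    rw [SimpleGraph.mem_neighborFinset] at hw
    have := hall ⟨(e.fst, w), hw⟩ rfl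
    have hsnd := congrArg (fun d : G.Dart => d.snd) this
    simp only at hsnd
    simp [hsnd]
  have := Finset.card_le_card hsub
  rw [← SimpleGraph.degree] at this  -- degree = card neighborFinset
  have h3 := hdeg e.fst
  simp at this
  omega

lemma rot_two_cycle_false (hdeg : ∀ v : V, 3 ≤ G.degree v) {e₁ e₂ : G.Dart}
    (h1 : R.rot e₁ = e₂) (h2 : R.rot e₂ = e₁) (hfst : e₁.fst = e₂.fst) : False := by
  have hall : ∀ d : G.Dart, d.fst = e₁.fst → d = e₁ ∨ d = e₂ := by
    intro d hd
    obtain ⟨i, hi⟩ := R.rot_cycle e₁ d hd.symm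
    have hfix : ∀ x : G.Dart, (R.rot x = e₁ ∨ R.rot x = e₂) = (x = e₁ ∨ x = e₂) := by
      intro x
      apply propext
      constructor
      · rintro (hx | hx)
        · right; exact R.rot.injective (by rw [hx, h2])
        · left; exact R.rot.injective (by rw [hx, h1])
      · rintro (hx | hx)
        · right; rw [hx, h1]
        · left; rw [hx, h2]
    have hmem := zpow_invariant R.rot (fun x => x = e₁ ∨ x = e₂) hfix i e₁
    simp only [eq_iff_iff] at hmem
    rw [← hi, hmem]
    exact Or.inl trivial
  have hsub : G.neighborFinset e₁.fst ⊆ {e₁.snd, e₂.snd} := by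
    intro w hw
    rw [SimpleGraph.mem_neighborFinset] at hw
    rcases hall ⟨(e₁.fst, w), hw⟩ rfl with h | h <;>
      · have hsnd := congrArg (fun d : G.Dart => d.snd) h
        simp only at hsnd
        simp [hsnd]
  have hcard := Finset.card_le_card hsub
  have h3 := hdeg e₁.fst
  rw [SimpleGraph.degree] at h3
  have : ({e₁.snd, e₂.snd} : Finset V).card ≤ 2 := Finset.card_insert_le _ _ |>.trans (by simp)
  omega

lemma facePerm_ne_self (d : G.Dart) : R.facePerm d ≠ d := by
  intro h
  have := R.facePerm_fst d
  rw [h] at this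
  exact d.fst_ne_snd this

lemma facePerm_eq_symm_of_sq (hdeg : ∀ v : V, 3 ≤ G.degree v) {d : G.Dart}
    (h : R.facePerm (R.facePerm d) = d) : False := by
  have h1 : R.facePerm d = d.symm := by
    ext : 1
    have ha : (R.facePerm d).fst = d.snd := R.facePerm_fst d
    have hb : (R.facePerm d).snd = d.fst := by
      have := R.facePerm_fst (R.facePerm d)
      rw [h] at this
      exact this.symm
    have : (R.facePerm d).toProd = (d.snd, d.fst) := Prod.ext ha hb
    rw [this]
    rfl
  rw [R.facePerm_apply] at h1
  exact R.rot_fix_false hdeg h1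

lemma facePerm_sq_ne_self (hdeg : ∀ v : V, 3 ≤ G.degree v) (d : G.Dart) :
    R.facePerm (R.facePerm d) ≠ d := fun h => R.facePerm_eq_symm_of_sq hdeg h


lemma faceOf_finite (d : G.Dart) : (R.faceOf d).Finite := Set.toFinite _

lemma faceLen_le_of_pow {d : G.Dart} {k : ℕ} (hk : 0 < k)
    (h : (R.facePerm ^ k) d = d) : R.faceLen d ≤ k := by
  classical
  set p := R.facePerm with hp
  set S : Set G.Dart := ↑((Finset.range k).image fun i => (p ^ i) d) with hS
  have hdS : d ∈ S := by
    simp only [hS, Finset.coe_image, Set.mem_image, Finset.mem_coe, Finset.mem_range]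
    exact ⟨0, hk, by simp⟩
  have hfix : ∀ x : G.Dart, (p x ∈ S) = (x ∈ S) := by
    intro x
    apply propext
    simp only [hS, Finset.coe_image, Set.mem_image, Finset.mem_coe, Finset.mem_range]
    constructor
    · rintro ⟨i, hik, hi⟩
      rcases Nat.eq_zero_or_pos i with h0 | h0
      · subst h0
        simp only [pow_zero, Equiv.Perm.coe_one, id_eq] at hi
        refine ⟨k - 1, by omega, ?_⟩
        have : (p ^ k) d = d := h
        have hk1 : k - 1 + 1 = k := by omega
        have : p ((p ^ (k - 1)) d) = d := by
          rw [← Equiv.Perm.mul_apply, ← pow_succ', hk1, h]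
        exact p.injective (by rw [this, hi])
      · refine ⟨i - 1, by omega, ?_⟩
        have hi1 : i - 1 + 1 = i := by omega
        have : p ((p ^ (i - 1)) d) = (p ^ i) d := by
          rw [← Equiv.Perm.mul_apply, ← pow_succ', hi1]
        exact p.injective (by rw [this, hi])
    · rintro ⟨i, hik, hi⟩
      rcases Nat.lt_or_ge (i + 1) k with h0 | h0
      · exact ⟨i + 1, h0, by rw [pow_succ', Equiv.Perm.mul_apply, hi]⟩
      · have hik1 : i + 1 = k := by omega
        refine ⟨0, hk, ?_⟩
        rw [pow_zero]
        rw [← hi, ← Equiv.Perm.mul_apply, ← pow_succ', hik1, h]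
        rfl
  have hsub : R.faceOf d ⊆ S := by
    rintro d' ⟨i, hi⟩
    have := zpow_invariant p (fun x => x ∈ S) hfix i d
    simp only [eq_iff_iff] at this
    rw [← hi]
    exact this.mpr hdS
  calc R.faceLen d ≤ S.ncard := Set.ncard_le_ncard hsub (Set.toFinite _)
    _ ≤ k := by
        rw [Set.ncard_coe_finset]
        exact (Finset.card_image_le).trans (by simp)

lemma pow_ne_of_faceLen {d : G.Dart} {k m : ℕ} (h : R.faceLen d = k) (hm : 0 < m)
    (hmk : m < k) : (R.facePerm ^ m) d ≠ d := by
  intro he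
  have := R.faceLen_le_of_pow hm he
  omega

lemma three_le_faceLen (hdeg : ∀ v : V, 3 ≤ G.degree v) (d : G.Dart) : 3 ≤ R.faceLen d := by
  classical
  set p := R.facePerm with hp
  have h01 : d ≠ p d := fun h => R.facePerm_ne_self d h.symm
  have h02 : d ≠ p (p d) := fun h => R.facePerm_sq_ne_self hdeg d h.symm
  have h12 : p d ≠ p (p d) := fun h => h01 (p.injective h)
  have hcard : ({d, p d, p (p d)} : Finset G.Dart).card = 3 :=
    Finset.card_eq_three.mpr ⟨d, p d, p (p d), h01, h02, h12, rfl⟩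
  have hsub : ↑({d, p d, p (p d)} : Finset G.Dart) ⊆ R.faceOf d := by
    intro x hx
    simp only [Finset.coe_insert, Set.mem_insert_iff, Finset.coe_singleton,
      Set.mem_singleton_iff] at hx
    rcases hx with h | h | h
    · rw [h]; exact R.mem_faceOf_self d
    · rw [h]
      have := R.pow_mem_faceOf d 1
      rwa [pow_one] at this
    · rw [h]
      have := R.pow_mem_faceOf d 2
      rwa [pow_two, Equiv.Perm.mul_apply] at this
  have := Set.ncard_le_ncard hsub (R.faceOf_finite d)
  rw [Set.ncard_coe_finset, hcard] at this
  exact this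

lemma pow_eq_of_faceLen {d : G.Dart} {k : ℕ} (hk : 0 < k) (h : R.faceLen d = k) :
    (R.facePerm ^ k) d = d := by
  classical
  set p := R.facePerm with hp
  have hcancel : ∀ i j : ℕ, i < j → (p ^ j) d = (p ^ i) d → (p ^ (j - i)) d = d := by
    intro i j hij he
    have : (p ^ i) ((p ^ (j - i)) d) = (p ^ i) d := by
      rw [← Equiv.Perm.mul_apply, ← pow_add]
      have : i + (j - i) = j := by omega
      rw [this, he]
    exact (p ^ i).injective this
  have hdist : ∀ i j : ℕ, i < j → j < k → (p ^ i) d ≠ (p ^ j) d := by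
    intro i j hij hjk he
    have := hcancel i j hij he.symm
    exact R.pow_ne_of_faceLen h (by omega) (by omega) this
  set S : Finset G.Dart := (Finset.range k).image fun i => (p ^ i) d with hS
  have hcard : S.card = k := by
    rw [hS, Finset.card_image_of_injOn, Finset.card_range]
    intro i hi j hj he
    simp only [Finset.mem_coe, Finset.mem_range] at hi hj
    rcases Nat.lt_trichotomy i j with h' | h' | h'
    · exact absurd he (hdist i j h' hj)
    · exact h'
    · exact absurd he.symm (hdist j i h' hi)
  have hsub : ↑S ⊆ R.faceOf d := by
    intro x hx
    simp only [hS, Finset.coe_image, Set.mem_image, Finset.mem_coe, Finset.mem_range] at hx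
    obtain ⟨i, _, hi⟩ := hx
    rw [← hi]
    exact R.pow_mem_faceOf d i
  have heq : ↑S = R.faceOf d := by
    apply Set.eq_of_subset_of_ncard_le hsub _ (R.faceOf_finite d)
    rw [Set.ncard_coe_finset, hcard]
    exact le_of_eq h
  have hmem : (p ^ k) d ∈ R.faceOf d := R.pow_mem_faceOf d k
  rw [← heq] at hmem
  simp only [hS, Finset.coe_image, Set.mem_image, Finset.mem_coe, Finset.mem_range] at hmem
  obtain ⟨i, hik, hi⟩ := hmem
  rcases Nat.eq_zero_or_pos i with h0 | h0
  · subst h0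
    rw [pow_zero] at hi
    exact hi.symm ▸ hi
  · exfalso
    have := hcancel i k hik hi.symm
    exact R.pow_ne_of_faceLen h (by omega) (by omega) this


end RotationSystem

section Aux
variable {V : Type*} {G : SimpleGraph V}

lemma cycleFree_five_aux (hC5 : G.CycleFree 5)
    {a b c d e : V} (hab : G.Adj a b) (hbc : G.Adj b c) (hcd : G.Adj c d)
    (hde : G.Adj d e) (hea : G.Adj e a)
    (hac : a ≠ c) (had : a ≠ d) (hbd : b ≠ d) (hbe : b ≠ e) (hce : c ≠ e) : False := by
  have h1 := hab.ne
  have h2 := hbc.ne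
  have h3 := hcd.ne
  have h4 := hde.ne
  have h5 := hea.ne
  have h1' := h1.symm
  have h2' := h2.symm
  have h3' := h3.symm
  have h4' := h4.symm
  have h5' := h5.symm
  have hac' := hac.symm
  have had' := had.symm
  have hbd' := hbd.symm
  have hbe' := hbe.symm
  have hce' := hce.symm
  have hw : (SimpleGraph.Walk.cons hab (.cons hbc (.cons hcd (.cons hde (.cons hea .nil))))
      : G.Walk a a).IsCycle := by
    rw [SimpleGraph.Walk.isCycle_def]
    refine ⟨?_, by simp, ?_⟩
    · rw [SimpleGraph.Walk.isTrail_def]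
      simp [Sym2.eq_iff, h1, h2, h3, h4, h5, h1', h2', h3', h4', h5',
        hac, had, hbd, hbe, hce, hac', had', hbd', hbe', hce']
    · simp [h1, h2, h3, h4, h5, h1', h2', h3', h4', h5',
        hac, had, hbd, hbe, hce, hac', had', hbd', hbe', hce']
  exact hC5 _ hw (by simp)

lemma cliqueFree_four_aux [DecidableEq V] (hK4 : G.CliqueFree 4)
    {a b c d : V} (hab : G.Adj a b) (hac : G.Adj a c) (had : G.Adj a d)
    (hbc : G.Adj b c) (hbd : G.Adj b d) (hcd : G.Adj c d) : False := by
  apply hK4 {a, b, c, d}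
  constructor
  · intro x hx y hy hxy
    simp only [Finset.coe_insert, Set.mem_insert_iff, Finset.coe_singleton,
      Set.mem_singleton_iff] at hx hy
    rcases hx with rfl | rfl | rfl | rfl <;> rcases hy with rfl | rfl | rfl | rfl <;>
      first
        | exact absurd rfl hxy
        | assumption
        | exact hab.symm
        | exact hac.symm
        | exact had.symm
        | exact hbc.symm
        | exact hbd.symm
        | exact hcd.symm
  · rw [Finset.card_insert_of_notMem (by simp [hab.ne, hac.ne, had.ne]),
      Finset.card_insert_of_notMem (by simp [hbc.ne, hbd.ne]),
      Finset.card_insert_of_notMem (by simp [hcd.ne]), Finset.card_singleton]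


lemma pow2_apply {α : Type*} (p : Equiv.Perm α) (x : α) : (p ^ 2) x = p (p x) := by
  rw [pow_two, Equiv.Perm.mul_apply]

lemma pow_succ_apply {α : Type*} (p : Equiv.Perm α) (n : ℕ) (x : α) :
    (p ^ (n + 1)) x = p ((p ^ n) x) := by
  rw [pow_succ', Equiv.Perm.mul_apply]

lemma dart_symm_fst (d : G.Dart) : d.symm.fst = d.snd := rfl
lemma dart_symm_snd (d : G.Dart) : d.symm.snd = d.fst := rfl

/-- if a dart and its facePerm-successor are reverses of each other, contradiction -/
lemma succ_ne_symm {V : Type*} {G : SimpleGraph V} [Fintype V] [DecidableEq V]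
    [DecidableRel G.Adj] (R : RotationSystem G) (hdeg : ∀ v : V, 3 ≤ G.degree v)
    {d : G.Dart} (h : R.facePerm d = d.symm) : False := by
  rw [R.facePerm_apply] at h
  exact R.rot_fix_false hdeg h

end Aux

namespace RotationSystem

variable {V : Type*} {G : SimpleGraph V} (R : RotationSystem G)
variable [Fintype V] [DecidableEq V] [DecidableRel G.Adj]

lemma faceLen_ne_five (hdeg : ∀ v : V, 3 ≤ G.degree v) (hC5 : G.CycleFree 5) (d : G.Dart) :
    R.faceLen d ≠ 5 := by
  intro h5
  set p := R.facePerm with hp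
  have hp5 : (p ^ 5) d = d := R.pow_eq_of_faceLen (by norm_num) h5
  set d0 := d with hd0
  set d1 := p d0 with hd1
  set d2 := p d1 with hd2
  set d3 := p d2 with hd3
  set d4 := p d3 with hd4
  have hpd4 : p d4 = d0 := by
    have : (p ^ 5) d = p (p (p (p (p d)))) := by
      rw [pow_succ_apply, pow_succ_apply, pow_succ_apply, pow_succ_apply, pow_one]
    rw [this] at hp5
    exact hp5
  have h1f : d1.fst = d0.snd := R.facePerm_fst d0
  have h2f : d2.fst = d1.snd := R.facePerm_fst d1
  have h3f : d3.fst = d2.snd := R.facePerm_fst d2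
  have h4f : d4.fst = d3.snd := R.facePerm_fst d3
  have h0f : d0.fst = d4.snd := by
    have := R.facePerm_fst d4
    rw [hpd4] at this
    exact this
  -- the five "gap 2" coincidences give rotation fixed points
  by_cases hv02 : d1.snd = d0.fst
  · exact succ_ne_symm R hdeg (d := d0)
      (by rw [← hd1]; ext : 1; exact Prod.ext h1f hv02)
  by_cases hv13 : d2.snd = d1.fst
  · exact succ_ne_symm R hdeg (d := d1)
      (by rw [← hd2]; ext : 1; exact Prod.ext h2f hv13)
  by_cases hv24 : d3.snd = d2.fst
  · exact succ_ne_symm R hdeg (d := d2)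
      (by rw [← hd3]; ext : 1; exact Prod.ext h3f hv24)
  by_cases hv30 : d4.snd = d3.fst
  · exact succ_ne_symm R hdeg (d := d3)
      (by rw [← hd4]; ext : 1; exact Prod.ext h4f hv30)
  by_cases hv41 : d0.snd = d4.fst
  · refine succ_ne_symm R hdeg (d := d4) ?_
    show p d4 = d4.symm
    rw [hpd4]; ext : 1; exact Prod.ext h0f hv41
  -- otherwise all five vertices are distinct, giving a C₅
  have hadj0 : G.Adj d0.fst d0.snd := d0.adj
  have hadj1 : G.Adj d0.snd d1.snd := by have := d1.adj; rwa [h1f] at this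
  have hadj2 : G.Adj d1.snd d2.snd := by have := d2.adj; rwa [h2f] at this
  have hadj3 : G.Adj d2.snd d3.snd := by have := d3.adj; rwa [h3f] at this
  have hadj4 : G.Adj d3.snd d0.fst := by
    have := d4.adj
    rwa [h4f, ← h0f] at this
  exact cycleFree_five_aux hC5 hadj0 hadj1 hadj2 hadj3 hadj4
    (fun h => hv02 h.symm)
    (fun h => hv30 (by rw [← h0f, h, h3f]))
    (fun h => hv13 (h.symm.trans h1f.symm))
    (fun h => hv41 (h.trans h4f.symm))
    (fun h => hv24 (h.symm.trans h2f.symm))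


lemma faceLen3_struct (hdeg : ∀ v : V, 3 ≤ G.degree v) {t : G.Dart} (h3 : R.faceLen t = 3) :
    R.facePerm (R.facePerm (R.facePerm t)) = t ∧
      (R.facePerm (R.facePerm t)).snd = t.fst ∧ (R.facePerm t).snd ≠ t.fst := by
  have hp3 : (R.facePerm ^ 3) t = t := R.pow_eq_of_faceLen (by norm_num) h3
  have hcube : R.facePerm (R.facePerm (R.facePerm t)) = t := by
    have : (R.facePerm ^ 3) t = R.facePerm (R.facePerm (R.facePerm t)) := by
      rw [pow_succ_apply, pow_succ_apply, pow_one]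
    rw [← this, hp3]
  refine ⟨hcube, ?_, ?_⟩
  · have := R.facePerm_fst (R.facePerm (R.facePerm t))
    rw [hcube] at this
    exact this.symm
  · intro h
    exact succ_ne_symm R hdeg (d := t) (by ext : 1; exact Prod.ext (R.facePerm_fst t) h)

lemma faceLen_symm_ne_four (hdeg : ∀ v : V, 3 ≤ G.degree v) (hC5 : G.CycleFree 5)
    {t : G.Dart} (h3 : R.faceLen t = 3) : R.faceLen t.symm ≠ 4 := by
  intro h4
  obtain ⟨hT3, hT2snd, hTne⟩ := R.faceLen3_struct hdeg h3
  set p := R.facePerm with hp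
  set t1 := p t with ht1
  set t2 := p t1 with ht2
  have ht1f : t1.fst = t.snd := R.facePerm_fst t
  have ht2f : t2.fst = t1.snd := R.facePerm_fst t1
  -- the 4-face
  set e0 := t.symm with he0
  set e1 := p e0 with he1
  set e2 := p e1 with he2
  set e3 := p e2 with he3
  have hp4 : p e3 = e0 := by
    have h4' : (p ^ 4) e0 = e0 := R.pow_eq_of_faceLen (by norm_num) h4
    have : (p ^ 4) e0 = p (p (p (p e0))) := by
      rw [pow_succ_apply, pow_succ_apply, pow_succ_apply, pow_one]
    rw [this] at h4'
    exact h4'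
  have he0f : e0.fst = t.snd := rfl
  have he0s : e0.snd = t.fst := rfl
  have he1f : e1.fst = t.fst := by rw [he1, R.facePerm_fst e0, he0s]
  have he2f : e2.fst = e1.snd := R.facePerm_fst e1
  have he3f : e3.fst = e2.snd := R.facePerm_fst e2
  have he3s : e3.snd = t.snd := by
    have := R.facePerm_fst e3
    rw [hp4] at this
    exact this.symm
  -- e1 ≠ t and e3 ≠ t  (darts of the 4-face are not darts of the 3-face)
  have hlen_ne : R.faceLen e0 ≠ R.faceLen t := by rw [h4, h3]; norm_num
  have hxb : e1.snd ≠ t.snd := by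
    intro h
    have he1t : e1 = t := by ext : 1; exact Prod.ext he1f h
    have hmem : e1 ∈ R.faceOf e0 := by
      have := R.pow_mem_faceOf e0 1
      rwa [pow_one] at this
    rw [he1t] at hmem
    exact hlen_ne (R.faceLen_eq_of_sameCycle hmem)
  have hya : e2.snd ≠ t.fst := by
    intro h
    have he3t : e3 = t := by ext : 1; exact Prod.ext (he3f.trans h) he3s
    have hmem : e3 ∈ R.faceOf e0 := by
      have := R.pow_mem_faceOf e0 3
      rwa [pow_succ_apply, pow_succ_apply, pow_one, ← he1, ← he2, ← he3] at this
    rw [he3t] at hmem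
    exact hlen_ne (R.faceLen_eq_of_sameCycle hmem)
  by_cases hxc : e1.snd = t1.snd
  · -- rotation 2-cycle at t.fst
    have hr1 : R.rot t = e1 := he1.symm
    have hr2 : R.rot e1 = t := by
      have ht2symm : t2.symm = e1 := by
        ext : 1
        exact Prod.ext (by rw [dart_symm_fst]; exact hT2snd.trans he1f.symm)
          (by rw [dart_symm_snd]; exact ht2f.trans hxc.symm)
      rw [← ht2symm]
      exact hT3
    exact R.rot_two_cycle_false hdeg hr1 hr2 he1f.symm
  by_cases hyc : e2.snd = t1.snd
  · have hr1 : R.rot e0 = t1 := by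
      have : p t = t1 := ht1.symm
      rw [hp, facePerm_apply] at this
      rwa [he0]
    have hr2 : R.rot t1 = e0 := by
      have h' : p e3 = e0 := hp4
      rw [hp, facePerm_apply] at h'
      have : e3.symm = t1 := by
        ext : 1
        exact Prod.ext (by rw [dart_symm_fst, he3s, ht1f])
          (by rw [dart_symm_snd, he3f, hyc])
      rwa [this] at h'
    exact R.rot_two_cycle_false hdeg hr1 hr2 (by rw [he0f, ht1f])
  · -- C5 on t.fst, e1.snd, e2.snd, t.snd, t1.snd
    have hadj1 : G.Adj t.fst e1.snd := by have := e1.adj; rwa [he1f] at this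
    have hadj2 : G.Adj e1.snd e2.snd := by have := e2.adj; rwa [he2f] at this
    have hadj3 : G.Adj e2.snd t.snd := by have := e3.adj; rwa [he3f, he3s] at this
    have hadj4 : G.Adj t.snd t1.snd := by have := t1.adj; rwa [ht1f] at this
    have hadj5 : G.Adj t1.snd t.fst := by have := t2.adj; rwa [ht2f, hT2snd] at this
    exact cycleFree_five_aux hC5 hadj1 hadj2 hadj3 hadj4 hadj5
      (fun h => hya h.symm) t.fst_ne_snd hxb hxc hyc


lemma double_tri_neighbors (hdeg : ∀ v : V, 3 ≤ G.degree v) (hC5 : G.CycleFree 5)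
    (hK4 : G.CliqueFree 4) {t : G.Dart} (h3 : R.faceLen t = 3)
    (h3s : R.faceLen t.symm = 3) :
    R.faceLen (R.facePerm t).symm ≠ 3 ∧
      R.faceLen (R.facePerm (R.facePerm t)).symm ≠ 3 := by
  set p := R.facePerm with hp
  obtain ⟨hT3, hT2snd, hTne⟩ := R.faceLen3_struct hdeg h3
  obtain ⟨hS3, hS2snd, hSne⟩ := R.faceLen3_struct hdeg h3s
  set t1 := p t with ht1
  set t2 := p t1 with ht2
  have ht1f : t1.fst = t.snd := R.facePerm_fst t
  have ht2f : t2.fst = t1.snd := R.facePerm_fst t1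
  set s0 := t.symm with hs0
  set s1 := p s0 with hs1
  set s2 := p s1 with hs2
  have hs0f : s0.fst = t.snd := rfl
  have hs0s : s0.snd = t.fst := rfl
  have hs1f : s1.fst = t.fst := by rw [hs1, R.facePerm_fst s0, hs0s]
  have hs2f : s2.fst = s1.snd := R.facePerm_fst s1
  -- the apex of the second triangle differs from the apex of the first
  have hxc : s1.snd ≠ t1.snd := by
    intro h
    have hr1 : R.rot t = s1 := hs1.symm
    have hr2 : R.rot s1 = t := by
      have ht2symm : t2.symm = s1 := by
        ext : 1
        exact Prod.ext (by rw [dart_symm_fst]; exact hT2snd.trans hs1f.symm)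
          (by rw [dart_symm_snd]; exact ht2f.trans h.symm)
      rw [← ht2symm]
      exact hT3
    exact R.rot_two_cycle_false hdeg hr1 hr2 hs1f.symm
  have hxb : s1.snd ≠ t.snd := hSne
  constructor
  · intro h3'
    obtain ⟨hU3, hU2snd, hUne⟩ := R.faceLen3_struct hdeg h3'
    set u0 := t1.symm with hu0
    set u1 := p u0 with hu1
    set u2 := p u1 with hu2
    have hu0f : u0.fst = t1.snd := rfl
    have hu0s : u0.snd = t.snd := by rw [hu0, dart_symm_snd, ht1f]
    have hu1f : u1.fst = t.snd := by rw [hu1, R.facePerm_fst u0, hu0s]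
    have hu2f : u2.fst = u1.snd := R.facePerm_fst u1
    have hu2s : u2.snd = t1.snd := hU2snd
    have hyc : u1.snd ≠ t1.snd := hUne
    by_cases hya : u1.snd = t.fst
    · -- then u1 = s0 and the two triangles coincide, contradiction with hxc
      have hu1s0 : u1 = s0 := by
        ext : 1
        exact Prod.ext (hu1f.trans rfl) (by rw [hya]; rfl)
      have : u2 = s1 := by rw [hu2, hu1s0, hs1]
      rw [this] at hu2s
      exact hxc hu2s
    by_cases hyx : u1.snd = s1.snd
    · -- K4 on t.fst, t.snd, t1.snd, s1.snd
      have hab : G.Adj t.fst t.snd := t.adj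
      have hac : G.Adj t.fst t1.snd := by
        have := t2.adj
        rw [ht2f, hT2snd] at this
        exact this.symm
      have had : G.Adj t.fst s1.snd := by have := s1.adj; rwa [hs1f] at this
      have hbc : G.Adj t.snd t1.snd := by have := t1.adj; rwa [ht1f] at this
      have hbd : G.Adj t.snd s1.snd := by
        have := s2.adj
        rw [hs2f, hS2snd, hs0f] at this
        exact this.symm
      have hcd : G.Adj t1.snd s1.snd := by
        have := u2.adj
        rw [hu2f, hyx, hu2s] at this
        exact this.symm
      exact cliqueFree_four_aux hK4 hab hac had hbc hbd hcd
    · -- C5 on u1.snd, t1.snd, t.fst, s1.snd, t.snd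
      have hab : G.Adj u1.snd t1.snd := by have := u2.adj; rwa [hu2f, hu2s] at this
      have hbc : G.Adj t1.snd t.fst := by have := t2.adj; rwa [ht2f, hT2snd] at this
      have hcd : G.Adj t.fst s1.snd := by have := s1.adj; rwa [hs1f] at this
      have hde : G.Adj s1.snd t.snd := by have := s2.adj; rwa [hs2f, hS2snd, hs0f] at this
      have hea : G.Adj t.snd u1.snd := by have := u1.adj; rwa [hu1f] at this
      refine cycleFree_five_aux hC5 hab hbc hcd hde hea hya hyx (fun h => hxc h.symm)
        ?_ t.fst_ne_snd
      rw [← ht1f]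
      exact t1.snd_ne_fst
  · intro h3''
    obtain ⟨hW3, hW2snd, hWne⟩ := R.faceLen3_struct hdeg h3''
    set w0 := t2.symm with hw0
    set w1 := p w0 with hw1
    set w2 := p w1 with hw2
    have hw0f : w0.fst = t.fst := by rw [hw0, dart_symm_fst, hT2snd]
    have hw0s : w0.snd = t1.snd := by rw [hw0, dart_symm_snd, ht2f]
    have hw1f : w1.fst = t1.snd := by rw [hw1, R.facePerm_fst w0, hw0s]
    have hw2f : w2.fst = w1.snd := R.facePerm_fst w1
    have hw2s : w2.snd = t.fst := by rw [hW2snd, hw0f]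
    have hza : w1.snd ≠ t.fst := by rw [← hw0f]; exact hWne
    have hzc : w1.snd ≠ t1.snd := by rw [← hw1f]; exact w1.snd_ne_fst
    by_cases hzb : w1.snd = t.snd
    · have hw2s0 : w2 = s0 := by
        ext : 1
        exact Prod.ext (by rw [hw2f, hzb]; rfl) (by rw [hw2s]; rfl)
      have : w0 = s1 := by rw [← hW3, hw2s0, hs1]
      have : s1.snd = t1.snd := by rw [← this, hw0s]
      exact hxc this
    by_cases hzx : w1.snd = s1.snd
    · have hab : G.Adj t.fst t.snd := t.adj
      have hac : G.Adj t.fst t1.snd := by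
        have := t2.adj
        rw [ht2f, hT2snd] at this
        exact this.symm
      have had : G.Adj t.fst s1.snd := by have := s1.adj; rwa [hs1f] at this
      have hbc : G.Adj t.snd t1.snd := by have := t1.adj; rwa [ht1f] at this
      have hbd : G.Adj t.snd s1.snd := by
        have := s2.adj
        rw [hs2f, hS2snd, hs0f] at this
        exact this.symm
      have hcd : G.Adj t1.snd s1.snd := by
        have := w1.adj
        rwa [hw1f, hzx] at this
      exact cliqueFree_four_aux hK4 hab hac had hbc hbd hcd
    · -- C5 on w1.snd, t.fst, s1.snd, t.snd, t1.snd
      have hab : G.Adj w1.snd t.fst := by have := w2.adj; rwa [hw2f, hw2s] at this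
      have hbc : G.Adj t.fst s1.snd := by have := s1.adj; rwa [hs1f] at this
      have hcd : G.Adj s1.snd t.snd := by have := s2.adj; rwa [hs2f, hS2snd, hs0f] at this
      have hde : G.Adj t.snd t1.snd := by have := t1.adj; rwa [ht1f] at this
      have hea : G.Adj t1.snd w1.snd := by have := w1.adj; rwa [hw1f] at this
      exact cycleFree_five_aux hC5 hab hbc hcd hde hea hzx hzb t.fst_ne_snd
        (fun h => hTne h.symm) hxc


lemma faceLen_facePerm (d : G.Dart) : R.faceLen (R.facePerm d) = R.faceLen d := by
  have h : R.facePerm d ∈ R.faceOf d := by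
    have := R.pow_mem_faceOf d 1
    rwa [pow_one] at this
  exact (R.faceLen_eq_of_sameCycle h).symm

lemma six_le_faceLen (hdeg : ∀ v : V, 3 ≤ G.degree v) (hC5 : G.CycleFree 5) {d : G.Dart}
    (hne : R.faceLen d ≠ 3) (hsymm3 : R.faceLen d.symm = 3) : 6 ≤ R.faceLen d := by
  have h3 := R.three_le_faceLen hdeg d
  have h4 : R.faceLen d ≠ 4 := by
    have := R.faceLen_symm_ne_four hdeg hC5 hsymm3
    rwa [Dart.symm_symm] at this
  have h5 := R.faceLen_ne_five hdeg hC5 d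
  omega

lemma two_mul_A1_le_A2 (hdeg : ∀ v : V, 3 ≤ G.degree v) (hC5 : G.CycleFree 5)
    (hK4 : G.CliqueFree 4) :
    2 * (Finset.univ.filter
        (fun d : G.Dart => R.faceLen d = 3 ∧ R.faceLen d.symm = 3)).card
      ≤ (Finset.univ.filter
        (fun d : G.Dart => R.faceLen d = 3 ∧ R.faceLen d.symm ≠ 3)).card := by
  classical
  set A1 := Finset.univ.filter
    (fun d : G.Dart => R.faceLen d = 3 ∧ R.faceLen d.symm = 3) with hA1
  set A2 := Finset.univ.filter
    (fun d : G.Dart => R.faceLen d = 3 ∧ R.faceLen d.symm ≠ 3) with hA2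
  have hmem1 : ∀ d ∈ A1, R.facePerm d ∈ A2 := by
    intro d hd
    rw [hA1, Finset.mem_filter] at hd
    obtain ⟨-, h3, h3s⟩ := hd
    rw [hA2, Finset.mem_filter]
    exact ⟨Finset.mem_univ _, by rw [R.faceLen_facePerm]; exact h3,
      (R.double_tri_neighbors hdeg hC5 hK4 h3 h3s).1⟩
  have hmem2 : ∀ d ∈ A1, R.facePerm (R.facePerm d) ∈ A2 := by
    intro d hd
    rw [hA1, Finset.mem_filter] at hd
    obtain ⟨-, h3, h3s⟩ := hd
    rw [hA2, Finset.mem_filter]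
    exact ⟨Finset.mem_univ _, by rw [R.faceLen_facePerm, R.faceLen_facePerm]; exact h3,
      (R.double_tri_neighbors hdeg hC5 hK4 h3 h3s).2⟩
  have hsub : A1.image R.facePerm ∪ A1.image (fun d => R.facePerm (R.facePerm d)) ⊆ A2 := by
    intro x hx
    rw [Finset.mem_union] at hx
    rcases hx with hx | hx <;> rw [Finset.mem_image] at hx <;> obtain ⟨d, hd, rfl⟩ := hx
    · exact hmem1 d hd
    · exact hmem2 d hd
  have hdisj : Disjoint (A1.image R.facePerm)
      (A1.image (fun d => R.facePerm (R.facePerm d))) := by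
    rw [Finset.disjoint_left]
    intro x hx1 hx2
    rw [Finset.mem_image] at hx1 hx2
    obtain ⟨d, hd, rfl⟩ := hx1
    obtain ⟨d', hd', heq⟩ := hx2
    have hdd : R.facePerm d' = d := R.facePerm.injective heq
    rw [hA1, Finset.mem_filter] at hd hd'
    have := (R.double_tri_neighbors hdeg hC5 hK4 hd'.2.1 hd'.2.2).1
    rw [hdd] at this
    exact this hd.2.2
  have hcard1 : (A1.image R.facePerm).card = A1.card :=
    Finset.card_image_of_injective _ R.facePerm.injective
  have hcard2 : (A1.image (fun d => R.facePerm (R.facePerm d))).card = A1.card :=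
    Finset.card_image_of_injective _ (R.facePerm.injective.comp R.facePerm.injective)
  have := Finset.card_le_card hsub
  rw [Finset.card_union_of_disjoint hdisj, hcard1, hcard2] at this
  omega

end RotationSystem

section Counting

/-- the number of classes of a setoid on a fintype equals the sum of the reciprocals of the
class sizes -/
lemma quot_card_eq_sum {α : Type*} [Fintype α] (s : Setoid α) [DecidableRel s.r]
    [DecidableEq (Quotient s)] :
    ((Nat.card (Quotient s)) : ℚ)
      = ∑ a : α, (1 : ℚ) / ((Finset.univ.filter (fun b => s.r a b)).card) := by
  classical
  rw [Nat.card_eq_fintype_card]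
  rw [← Finset.sum_fiberwise Finset.univ (fun a => Quotient.mk s a)
    (fun a => (1 : ℚ) / ((Finset.univ.filter (fun b => s.r a b)).card))]
  rw [Fintype.card, Finset.card_eq_sum_ones, Nat.cast_sum]
  apply Finset.sum_congr rfl
  intro q _
  induction q using Quotient.inductionOn with
  | h a0 =>
    have hfiber : ∀ a ∈ Finset.univ.filter
        (fun a => Quotient.mk s a = Quotient.mk s a0),
        (Finset.univ.filter (fun b => s.r a b))
          = Finset.univ.filter (fun a => Quotient.mk s a = Quotient.mk s a0) := by
      intro a ha
      rw [Finset.mem_filter] at ha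
      ext b
      simp only [Finset.mem_filter, Finset.mem_univ, true_and]
      rw [← ha.2]
      exact ⟨fun h => (Quotient.sound (Setoid.symm h) : Quotient.mk s b = Quotient.mk s a),
        fun h => Setoid.symm (Quotient.exact h)⟩
    rw [Finset.sum_congr rfl (fun a ha => by rw [hfiber a ha])]
    rw [Finset.sum_const]
    have hne : a0 ∈ Finset.univ.filter
        (fun a => Quotient.mk s a = Quotient.mk s a0) := by
      simp only [Finset.mem_filter, Finset.mem_univ, true_and]
    have hpos : 0 < (Finset.univ.filter
        (fun a => Quotient.mk s a = Quotient.mk s a0)).card :=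
      Finset.card_pos.mpr ⟨a0, hne⟩
    rw [nsmul_eq_mul, mul_one_div, div_self (by exact_mod_cast hpos.ne')]
    norm_num


lemma fiber_card_sum {α β : Type*} [Fintype α] [Fintype β] (g : α → β) :
    ∑ b : β, Nat.card {a // g a = b} = Fintype.card α := by
  classical
  have h := Fintype.card_congr (Equiv.sigmaFiberEquiv g)
  rw [Fintype.card_sigma] at h
  calc ∑ b : β, Nat.card {a // g a = b}
      = ∑ b : β, Fintype.card {a // g a = b} :=
        Finset.sum_congr rfl (fun b _ => Nat.card_eq_fintype_card)
    _ = Fintype.card α := h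

end Counting

namespace RotationSystem

variable {V : Type*} {G : SimpleGraph V} (R : RotationSystem G)
variable [Fintype V] [DecidableEq V] [DecidableRel G.Adj]

lemma sameCycle_component {d d' : G.Dart} (h : R.facePerm.SameCycle d d') :
    G.connectedComponentMk d.fst = G.connectedComponentMk d'.fst := by
  obtain ⟨i, hi⟩ := h
  rw [← hi]
  exact (zpow_invariant R.facePerm (fun x => G.connectedComponentMk x.fst)
    (fun x => by
      show G.connectedComponentMk (R.facePerm x).fst = G.connectedComponentMk x.fst
      rw [R.facePerm_fst]
      exact (SimpleGraph.ConnectedComponent.connectedComponentMk_eq_of_adj x.adj).symm) i d).symm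

lemma faceLen_eq_card (d : G.Dart) [DecidablePred (R.facePerm.SameCycle d)] :
    R.faceLen d = (Finset.univ.filter (fun d' => R.facePerm.SameCycle d d')).card := by
  have h : R.faceOf d = ↑(Finset.univ.filter (fun d' => R.facePerm.SameCycle d d')) := by
    ext x
    simp [faceOf]
  rw [faceLen, h, Set.ncard_coe_finset]

lemma faceSum_component [DecidableEq G.ConnectedComponent] (C : G.ConnectedComponent) :
    ((Nat.card (Quotient (R.faceSetoidIn C))) : ℚ)
      = ∑ d ∈ Finset.univ.filter
          (fun d : G.Dart => G.connectedComponentMk d.fst = C),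
          (1 : ℚ) / R.faceLen d := by
  classical
  rw [quot_card_eq_sum (R.faceSetoidIn C)]
  rw [Finset.sum_subtype (Finset.univ.filter
      (fun d : G.Dart => G.connectedComponentMk d.fst = C))
    (p := fun d : G.Dart => G.connectedComponentMk d.fst = C) (by simp)
    (fun d => (1 : ℚ) / R.faceLen d)]
  apply Finset.sum_congr rfl
  intro a _
  congr 1
  have hcard : (Finset.univ.filter
      (fun b : {d : G.Dart // G.connectedComponentMk d.fst = C} =>
        (R.faceSetoidIn C).r a b)).card
      = (Finset.univ.filter (fun d' : G.Dart => R.facePerm.SameCycle a.1 d')).card := by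
    apply Finset.card_bij (fun b _ => b.1)
    · intro b hb
      rw [Finset.mem_filter] at hb ⊢
      exact ⟨Finset.mem_univ _, hb.2⟩
    · intro b1 hb1 b2 hb2 h
      exact Subtype.ext h
    · intro d' hd'
      rw [Finset.mem_filter] at hd'
      refine ⟨⟨d', ?_⟩, ?_, rfl⟩
      · rw [← R.sameCycle_component hd'.2]
        exact a.2
      · rw [Finset.mem_filter]
        exact ⟨Finset.mem_univ _, hd'.2⟩
  rw [hcard, ← R.faceLen_eq_card]

end RotationSystem


end PlanarTuran

open PlanarTuran

/-- Let `G` be a plane graph (a graph together with a genus-zero embedding)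
containing neither `K₄` nor `C₅` as a subgraph, on `n ≥ 5` vertices, with minimum degree at
least `3`. Then `e(G) ≤ (15/7)(n - 2)`. -/
theorem planeGraph_K4_C5_free_minDeg_three_edge_bound {V : Type*} [Fintype V] [DecidableEq V]
    (G : SimpleGraph V) [DecidableRel G.Adj]
    (R : PlanarTuran.RotationSystem G) (hplane : R.GenusZero)
    (hK4 : G.CliqueFree 4) (hC5 : G.CycleFree 5)
    (n : ℕ) (hn : Fintype.card V = n) (hn5 : 5 ≤ n)
    (hdeg : ∀ v : V, 3 ≤ G.degree v) :
    (G.edgeFinset.card : ℚ) ≤ 15 / 7 * ((n : ℚ) - 2) := by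
  classical
  letI : Fintype G.ConnectedComponent := Fintype.ofFinite _
  set F : ℚ := ∑ d : G.Dart, (1 : ℚ) / R.faceLen d with hF
  have hdart : Fintype.card G.Dart = 2 * G.edgeFinset.card := G.dart_card_eq_twice_card_edges
  -- Step A : F ≤ (4/15) * #darts
  have hA : F ≤ 4 / 15 * (Fintype.card G.Dart : ℚ) := by
    set f : G.Dart → ℚ := fun d => (1 : ℚ) / R.faceLen d with hf
    set P1 : G.Dart → Prop := fun d => R.faceLen d = 3 with hP1
    set P2 : G.Dart → Prop := fun d => R.faceLen d.symm = 3 with hP2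
    set A1 := Finset.univ.filter (fun d => P1 d ∧ P2 d) with hA1
    set A2 := Finset.univ.filter (fun d => P1 d ∧ ¬ P2 d) with hA2
    set B1 := Finset.univ.filter (fun d => ¬ P1 d ∧ P2 d) with hB1
    set B2 := Finset.univ.filter (fun d => ¬ P1 d ∧ ¬ P2 d) with hB2
    have e0 : F = ∑ d ∈ Finset.univ.filter P1, f d
        + ∑ d ∈ Finset.univ.filter (fun d => ¬ P1 d), f d :=
      (Finset.sum_filter_add_sum_filter_not Finset.univ P1 f).symm
    have e1 : ∑ d ∈ Finset.univ.filter P1, f d = ∑ d ∈ A1, f d + ∑ d ∈ A2, f d := by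
      rw [hA1, hA2, ← Finset.filter_filter, ← Finset.filter_filter]
      exact (Finset.sum_filter_add_sum_filter_not (Finset.univ.filter P1) P2 f).symm
    have e2 : ∑ d ∈ Finset.univ.filter (fun d => ¬ P1 d), f d
        = ∑ d ∈ B1, f d + ∑ d ∈ B2, f d := by
      rw [hB1, hB2, ← Finset.filter_filter, ← Finset.filter_filter]
      exact (Finset.sum_filter_add_sum_filter_not
        (Finset.univ.filter (fun d => ¬ P1 d)) P2 f).symm
    have bA1 : ∑ d ∈ A1, f d ≤ A1.card * (1 / 3 : ℚ) := by
      rw [← nsmul_eq_mul]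
      apply Finset.sum_le_card_nsmul
      intro d hd
      rw [hA1, Finset.mem_filter] at hd
      rw [hf]
      simp only
      rw [hd.2.1]
      norm_num
    have bA2 : ∑ d ∈ A2, f d ≤ A2.card * (1 / 3 : ℚ) := by
      rw [← nsmul_eq_mul]
      apply Finset.sum_le_card_nsmul
      intro d hd
      rw [hA2, Finset.mem_filter] at hd
      rw [hf]
      simp only
      rw [hd.2.1]
      norm_num
    have bB1 : ∑ d ∈ B1, f d ≤ B1.card * (1 / 6 : ℚ) := by
      rw [← nsmul_eq_mul]
      apply Finset.sum_le_card_nsmul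
      intro d hd
      rw [hB1, Finset.mem_filter] at hd
      have h6 : 6 ≤ R.faceLen d := R.six_le_faceLen hdeg hC5 hd.2.1 hd.2.2
      rw [hf]
      simp only
      rw [div_le_div_iff₀ (by exact_mod_cast Nat.lt_of_lt_of_le (by norm_num) h6) (by norm_num)]
      have : (6 : ℚ) ≤ R.faceLen d := by exact_mod_cast h6
      linarith
    have bB2 : ∑ d ∈ B2, f d ≤ B2.card * (1 / 4 : ℚ) := by
      rw [← nsmul_eq_mul]
      apply Finset.sum_le_card_nsmul
      intro d hd
      rw [hB2, Finset.mem_filter] at hd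
      have h3 := R.three_le_faceLen hdeg d
      have h4 : 4 ≤ R.faceLen d := by
        rcases Nat.lt_or_ge (R.faceLen d) 4 with h | h
        · exact absurd (by omega : R.faceLen d = 3) hd.2.1
        · exact h
      rw [hf]
      simp only
      rw [div_le_div_iff₀ (by exact_mod_cast Nat.lt_of_lt_of_le (by norm_num) h4) (by norm_num)]
      have : (4 : ℚ) ≤ R.faceLen d := by exact_mod_cast h4
      linarith
    have hb1a2 : B1.card = A2.card := by
      apply Finset.card_bij (fun d _ => d.symm)
      · intro d hd
        rw [hB1, Finset.mem_filter] at hd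
        rw [hA2, Finset.mem_filter]
        refine ⟨Finset.mem_univ _, hd.2.2, ?_⟩
        rw [hP2]
        simp only
        rw [Dart.symm_symm]
        exact hd.2.1
      · intro d1 h1 d2 h2 h
        have := congrArg Dart.symm h
        rwa [Dart.symm_symm, Dart.symm_symm] at this
      · intro d hd
        rw [hA2, Finset.mem_filter] at hd
        refine ⟨d.symm, ?_, Dart.symm_symm d⟩
        rw [hB1, Finset.mem_filter]
        refine ⟨Finset.mem_univ _, ?_, ?_⟩
        · rw [hP1]
          simp only
          exact hd.2.2
        · rw [hP2]
          simp only
          rw [Dart.symm_symm]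
          exact hd.2.1
    have h2a : 2 * A1.card ≤ A2.card := R.two_mul_A1_le_A2 hdeg hC5 hK4
    have hcards : A1.card + A2.card + (B1.card + B2.card) = Fintype.card G.Dart := by
      have u1 : A1.card + A2.card = (Finset.univ.filter P1).card := by
        rw [hA1, hA2, ← Finset.filter_filter, ← Finset.filter_filter]
        exact Finset.card_filter_add_card_filter_not (p := P2)
      have u2 : B1.card + B2.card = (Finset.univ.filter (fun d => ¬ P1 d)).card := by
        rw [hB1, hB2, ← Finset.filter_filter, ← Finset.filter_filter]
        exact Finset.card_filter_add_card_filter_not (p := P2)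
      rw [u1, u2, ← Finset.card_univ]
      exact Finset.card_filter_add_card_filter_not (p := P1)
    have hcards' : (A1.card : ℚ) + A2.card + B1.card + B2.card = (Fintype.card G.Dart : ℚ) := by
      exact_mod_cast by linarith [hcards]
    have h2a' : 2 * (A1.card : ℚ) ≤ (A2.card : ℚ) := by exact_mod_cast h2a
    have hb1a2' : (B1.card : ℚ) = (A2.card : ℚ) := by exact_mod_cast hb1a2
    rw [e0, e1, e2]
    linarith [bA1, bA2, bB1, bB2]
  -- Step B : Euler's formula summed over components
  have hcomp : ∀ C : G.ConnectedComponent, ∃ d : G.Dart, G.connectedComponentMk d.fst = C := by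
    intro C
    obtain ⟨v, rfl⟩ := C.exists_rep
    have hv : 0 < G.degree v := lt_of_lt_of_le (by norm_num) (hdeg v)
    rw [SimpleGraph.degree_pos_iff_exists_adj] at hv
    obtain ⟨w, hw⟩ := hv
    exact ⟨⟨(v, w), hw⟩, rfl⟩
  have hEuler : ∀ C : G.ConnectedComponent,
      2 * (Nat.card {v : V // G.connectedComponentMk v = C} : ℚ)
        + 2 * ∑ d ∈ Finset.univ.filter
            (fun d : G.Dart => G.connectedComponentMk d.fst = C), (1 : ℚ) / R.faceLen d
      = (Nat.card {d : G.Dart // G.connectedComponentMk d.fst = C} : ℚ) + 4 := by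
    intro C
    have h := hplane C (hcomp C)
    rw [← R.faceSum_component C]
    exact_mod_cast congrArg (fun k : ℕ => (k : ℚ)) h
  have hVsum : ∑ C : G.ConnectedComponent,
      (Nat.card {v : V // G.connectedComponentMk v = C} : ℚ) = (Fintype.card V : ℚ) := by
    exact_mod_cast congrArg (Nat.cast : ℕ → ℚ)
      (fiber_card_sum (fun v : V => G.connectedComponentMk v))
  have hDsum : ∑ C : G.ConnectedComponent,
      (Nat.card {d : G.Dart // G.connectedComponentMk d.fst = C} : ℚ)
      = (Fintype.card G.Dart : ℚ) := by
    exact_mod_cast congrArg (Nat.cast : ℕ → ℚ)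
      (fiber_card_sum (fun d : G.Dart => G.connectedComponentMk d.fst))
  have hSsum : ∑ C : G.ConnectedComponent, ∑ d ∈ Finset.univ.filter
      (fun d : G.Dart => G.connectedComponentMk d.fst = C), (1 : ℚ) / R.faceLen d = F :=
    Finset.sum_fiberwise _ _ _
  have heq : 2 * (Fintype.card V : ℚ) + 2 * F
      = (Fintype.card G.Dart : ℚ) + 4 * (Fintype.card G.ConnectedComponent : ℚ) := by
    have hs := Finset.sum_congr rfl (fun C (_ : C ∈ Finset.univ) => hEuler C)
    rw [Finset.sum_add_distrib, ← Finset.mul_sum, ← Finset.mul_sum, hVsum, hSsum,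
      Finset.sum_add_distrib, hDsum, Finset.sum_const, Finset.card_univ, nsmul_eq_mul] at hs
    rw [hs]
    ring
  have hc1 : 1 ≤ Fintype.card G.ConnectedComponent := by
    have hV0 : 0 < Fintype.card V := by omega
    obtain ⟨v⟩ := Fintype.card_pos_iff.mp hV0
    exact Fintype.card_pos_iff.mpr ⟨G.connectedComponentMk v⟩
  have hc1' : (1 : ℚ) ≤ (Fintype.card G.ConnectedComponent : ℚ) := by exact_mod_cast hc1
  have hdart' : (Fintype.card G.Dart : ℚ) = 2 * (G.edgeFinset.card : ℚ) := by
    exact_mod_cast hdart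
  have hV' : (Fintype.card V : ℚ) = (n : ℚ) := by exact_mod_cast hn
  rw [hdart'] at hA heq
  rw [hV'] at heq
  linarith
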